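/- arXiv:1811.07781 — 2 statements merged into one kernel-verified Lean document; each statement's English description precedes it below -/
import Mathlib

section
/- Fix κ ≥ 0 and let A ∈ C²(ℝ, M²) be the solution of the initial value problem Ä + κA = Λ(A,Ȧ)·cof A with data (A₀,B₀) ∈ D. Then A is an equilibrium (i.e. Ȧ(t) = 0 for all t ∈ ℝ) if and only if X₁(A₀,B₀) = κ. -/
open Matrix

noncomputable section

/-- `M²`: the space of 2×2 real matrices. -/
abbrev M2 : Type := Matrix (Fin 2) (Fin 2) ℝ

/-- Frobenius inner product `⟨A,B⟩ = tr(AᵀB)`. -/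
def mip (A B : M2) : ℝ := (Aᵀ * B).trace

/-- Frobenius norm `|A| = ⟨A,A⟩^{1/2}`. -/
def fnorm (A : M2) : ℝ := Real.sqrt (mip A A)

/-- The matrix Z = [[0,−1],[1,0]]. -/
def Zm : M2 := !![0, -1; 1, 0]

/-- The matrix K = [[1,0],[0,−1]]. -/
def Km : M2 := !![1, 0; 0, -1]

/-- The matrix M = [[0,1],[1,0]]. -/
def Mm : M2 := !![0, 1; 1, 0]

/-- Cofactor: cof [[a,b],[c,d]] = [[d,−c],[−b,a]]. -/
def cofm (A : M2) : M2 := !![A 1 1, -(A 1 0); -(A 0 1), A 0 0]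

/-- Membership in SO(2,ℝ). -/
def isSO (U : M2) : Prop := U.det = 1 ∧ U⁻¹ = Uᵀ

/-- The rotation U(θ) = cos θ·I + sin θ·Z. -/
def Um (θ : ℝ) : M2 := Real.cos θ • (1 : M2) + Real.sin θ • Zm

/-- Invariant X₁(A,B) = ½|B|² + (κ/2)|A|². -/
def X1 (κ : ℝ) (A B : M2) : ℝ := (1/2) * mip B B + (κ/2) * mip A A

/-- Invariant X₂(A,B) = ½⟨ZA − AZ, B⟩. -/
def X2 (A B : M2) : ℝ := (1/2) * mip (Zm * A - A * Zm) B

/-- Invariant X₃(A,B) = ½⟨ZA + AZ, B⟩. -/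
def X3 (A B : M2) : ℝ := (1/2) * mip (Zm * A + A * Zm) B

/-- Lagrange multiplier Λ(A,B) = 2(κ − det B)/|A|². -/
def Lam (κ : ℝ) (A B : M2) : ℝ := 2 * (κ - B.det) / (mip A A)

attribute [local instance] Matrix.normedAddCommGroup Matrix.normedSpace

/- ### Auxiliary lemmas -/

lemma mip_expand (X Y : M2) : mip X Y
    = X 0 0 * Y 0 0 + X 0 1 * Y 0 1 + X 1 0 * Y 1 0 + X 1 1 * Y 1 1 := by
  simp [mip, Matrix.trace_fin_two, Matrix.mul_apply, Fin.sum_univ_two]; ring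

lemma cof00 (X : M2) : cofm X 0 0 = X 1 1 := rfl
lemma cof01 (X : M2) : cofm X 0 1 = -(X 1 0) := rfl
lemma cof10 (X : M2) : cofm X 1 0 = -(X 0 1) := rfl
lemma cof11 (X : M2) : cofm X 1 1 = X 0 0 := rfl

/-- Constancy of a function with vanishing derivative on an open convex set. -/
lemma const_of_deriv0 {s : Set ℝ} (hs : IsOpen s) (hconv : Convex ℝ s)
    {f : ℝ → ℝ} (hf : ∀ x ∈ s, HasDerivAt f 0 x) {x y : ℝ}
    (hx : x ∈ s) (hy : y ∈ s) : f x = f y := by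
  refine hconv.is_const_of_fderivWithin_eq_zero
    (fun z hz => (hf z hz).differentiableAt.differentiableWithinAt) (fun z hz => ?_) hx hy
  rw [fderivWithin_of_isOpen hs hz]
  have h0 : HasFDerivAt f (0 : ℝ →L[ℝ] ℝ) z := by
    have h := (hf z hz).hasFDerivAt
    simpa using h
  exact h0.fderiv

/-- Entry projection as a continuous linear map. -/
def Em (i j : Fin 2) : M2 →L[ℝ] ℝ :=
  (ContinuousLinearMap.proj j).comp
    (ContinuousLinearMap.proj (R := ℝ) (φ := fun _ : Fin 2 => Fin 2 → ℝ) i)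

/-- equilibria are characterized by X₁ = κ. -/
theorem equilibrium_iff (κ : ℝ) (hκ : 0 ≤ κ) (A₀ B₀ : M2)
    (hdet : A₀.det = 1) (htan : mip B₀ (cofm A₀) = 0)
    (A : ℝ → M2) (hA : ContDiff ℝ 2 A)
    (hA0 : A 0 = A₀) (hB0 : deriv A 0 = B₀)
    (hode : ∀ t : ℝ, deriv (deriv A) t + κ • A t
      = Lam κ (A t) (deriv A t) • cofm (A t)) :
    (∀ t : ℝ, deriv A t = 0) ↔ X1 κ A₀ B₀ = κ := by
  -- differentiability
  have hd1 : Differentiable ℝ A := hA.differentiable (by norm_num)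
  have hd2 : Differentiable ℝ (deriv A) := by
    rw [show (2 : WithTop ℕ∞) = 1 + 1 from rfl, contDiff_succ_iff_deriv] at hA
    exact hA.2.2.differentiable (by norm_num)
  -- entrywise derivatives
  have hAe : ∀ (i j : Fin 2) (t : ℝ), HasDerivAt (fun s => A s i j) (deriv A t i j) t :=
    fun i j t => (Em i j).hasFDerivAt.comp_hasDerivAt t (hd1 t).hasDerivAt
  have hBe : ∀ (i j : Fin 2) (t : ℝ),
      HasDerivAt (fun s => deriv A s i j) (deriv (deriv A) t i j) t :=
    fun i j t => (Em i j).hasFDerivAt.comp_hasDerivAt t (hd2 t).hasDerivAt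
  -- the ODE, entrywise
  have hodeE : ∀ (t : ℝ) (i j : Fin 2), deriv (deriv A) t i j
      = Lam κ (A t) (deriv A t) * cofm (A t) i j - κ * A t i j := by
    intro t i j
    have h := congrFun (congrFun (hode t) i) j
    simp only [Matrix.add_apply, Matrix.smul_apply, smul_eq_mul] at h
    linarith
  -- scalar functions
  set g : ℝ → ℝ := fun t => A t 0 0 * A t 1 1 - A t 0 1 * A t 1 0 with hgdef
  set G : ℝ → ℝ := fun t => deriv A t 0 0 * A t 1 1 + A t 0 0 * deriv A t 1 1
      - deriv A t 0 1 * A t 1 0 - A t 0 1 * deriv A t 1 0 with hGdef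
  set sq : ℝ → ℝ := fun t =>
      A t 0 0 ^ 2 + A t 0 1 ^ 2 + A t 1 0 ^ 2 + A t 1 1 ^ 2 with hsqdef
  have hmipA : ∀ t, mip (A t) (A t) = sq t := by
    intro t; rw [mip_expand]; simp only [hsqdef]; ring
  have hg' : ∀ t, HasDerivAt g (G t) t := by
    intro t
    have h := (((hAe 0 0 t).mul (hAe 1 1 t)).sub ((hAe 0 1 t).mul (hAe 1 0 t)))
    refine h.congr_deriv ?_
    simp only [hGdef]; ring
  set G2 : ℝ → ℝ := fun t =>
      (deriv (deriv A) t 0 0 * A t 1 1 + deriv A t 0 0 * deriv A t 1 1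
        + (deriv A t 0 0 * deriv A t 1 1 + A t 0 0 * deriv (deriv A) t 1 1))
      - (deriv (deriv A) t 0 1 * A t 1 0 + deriv A t 0 1 * deriv A t 1 0)
      - (deriv A t 0 1 * deriv A t 1 0 + A t 0 1 * deriv (deriv A) t 1 0) with hG2def
  have hG' : ∀ t, HasDerivAt G (G2 t) t := by
    intro t
    have h := ((((hBe 0 0 t).mul (hAe 1 1 t)).add ((hAe 0 0 t).mul (hBe 1 1 t))).sub
      ((hBe 0 1 t).mul (hAe 1 0 t))).sub ((hAe 0 1 t).mul (hBe 1 0 t))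
    refine h.congr_deriv ?_; (simp only [hG2def])
  have hG2val : ∀ t, sq t ≠ 0 → G2 t = 2 * κ * (1 - g t) := by
    intro t hs
    simp only [hG2def]
    rw [hodeE t 0 0, hodeE t 1 1, hodeE t 0 1, hodeE t 1 0,
      cof00, cof01, cof10, cof11]
    simp only [Lam, Matrix.det_fin_two, hmipA t, hgdef]
    field_simp
    ring
  -- continuity
  have hconA : ∀ i j : Fin 2, Continuous fun t => A t i j :=
    fun i j => continuous_iff_continuousAt.mpr fun t => (hAe i j t).continuousAt
  have hconB : ∀ i j : Fin 2, Continuous fun t => deriv A t i j :=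
    fun i j => continuous_iff_continuousAt.mpr fun t => (hBe i j t).continuousAt
  have hgcon : Continuous g := by
    simp only [hgdef]
    exact (((hconA 0 0).mul (hconA 1 1)).sub ((hconA 0 1).mul (hconA 1 0)))
  have hGcon : Continuous G := by
    simp only [hGdef]
    exact (((((hconB 0 0).mul (hconA 1 1)).add ((hconA 0 0).mul (hconB 1 1))).sub
      ((hconB 0 1).mul (hconA 1 0))).sub ((hconA 0 1).mul (hconB 1 0)))
  have hsqcon : Continuous sq := by
    simp only [hsqdef]
    exact ((((hconA 0 0).pow 2).add ((hconA 0 1).pow 2)).add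
      ((hconA 1 0).pow 2)).add ((hconA 1 1).pow 2)
  -- the invariant clopen set
  set T : Set ℝ := {t | g t = 1 ∧ G t = 0} with hTdef
  have hTclosed : IsClosed T :=
    ((isClosed_eq hgcon continuous_const).inter (isClosed_eq hGcon continuous_const))
  have hTopen : IsOpen T := by
    rw [Metric.isOpen_iff]
    intro t₀ ht₀
    obtain ⟨hg1, hG0⟩ := ht₀
    have hsq2 : (2:ℝ) ≤ sq t₀ := by
      simp only [hsqdef]
      have := hg1
      simp only [hgdef] at this
      nlinarith [sq_nonneg (A t₀ 0 0 - A t₀ 1 1), sq_nonneg (A t₀ 0 1 + A t₀ 1 0)]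
    have hopen : IsOpen {t | 0 < sq t} := isOpen_lt continuous_const hsqcon
    obtain ⟨ε, hε, hball⟩ := Metric.isOpen_iff.mp hopen t₀ (by
      show 0 < sq t₀; linarith)
    refine ⟨ε, hε, ?_⟩
    have hconv : Convex ℝ (Metric.ball t₀ ε) := convex_ball t₀ ε
    have hbopen : IsOpen (Metric.ball t₀ ε) := Metric.isOpen_ball
    set E : ℝ → ℝ := fun t => G t ^ 2 + 2 * κ * (g t - 1) ^ 2 with hEdef
    have hE' : ∀ x ∈ Metric.ball t₀ ε, HasDerivAt E 0 x := by
      intro x hx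
      have hsx : sq x ≠ 0 := ne_of_gt (hball hx)
      have h := ((hG' x).pow 2).add
        ((((hg' x).sub_const 1).pow 2).const_mul (2 * κ))
      refine h.congr_deriv ?_
      rw [hG2val x hsx]
      push_cast
      ring
    have hEconst : ∀ x ∈ Metric.ball t₀ ε, E x = E t₀ := fun x hx =>
      const_of_deriv0 hbopen hconv hE' hx (Metric.mem_ball_self hε)
    have hEt0 : E t₀ = 0 := by simp only [hEdef]; rw [hg1, hG0]; ring
    have hGzero : ∀ x ∈ Metric.ball t₀ ε, G x = 0 := by
      intro x hx
      have h := hEconst x hx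
      rw [hEt0] at h
      simp only [hEdef] at h
      have h1 : G x ^ 2 ≤ 0 := by nlinarith [sq_nonneg (g x - 1)]
      have h2 : G x ^ 2 = 0 := le_antisymm h1 (sq_nonneg _)
      exact pow_eq_zero_iff two_ne_zero |>.mp h2
    have hgconst : ∀ x ∈ Metric.ball t₀ ε, g x = 1 := by
      intro x hx
      have : g x = g t₀ := by
        refine const_of_deriv0 hbopen hconv (fun z hz => ?_) hx (Metric.mem_ball_self hε)
        have := hg' z
        rwa [hGzero z hz] at this
      rw [this, hg1]
    intro x hx
    exact ⟨hgconst x hx, hGzero x hx⟩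
  have h0T : (0:ℝ) ∈ T := by
    constructor
    · show g 0 = 1
      simp only [hgdef, hA0]
      rw [Matrix.det_fin_two] at hdet
      linarith
    · show G 0 = 0
      simp only [hGdef, hA0, hB0]
      rw [mip_expand, cof00, cof01, cof10, cof11] at htan
      linarith
  have hTuniv : ∀ t, g t = 1 ∧ G t = 0 := by
    rcases isClopen_iff.mp ⟨hTclosed, hTopen⟩ with h | h
    · exact absurd h0T (by rw [h]; exact Set.notMem_empty 0)
    · intro t
      have ht : t ∈ T := by rw [h]; trivial
      exact ht
  -- |A t|² ≥ 2 everywhere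
  have hsq2 : ∀ t, (2:ℝ) ≤ sq t := by
    intro t
    have hg1 := (hTuniv t).1
    simp only [hgdef] at hg1
    simp only [hsqdef]
    nlinarith [sq_nonneg (A t 0 0 - A t 1 1), sq_nonneg (A t 0 1 + A t 1 0)]
  -- conservation of energy
  set H : ℝ → ℝ := fun t =>
    (1/2) * (deriv A t 0 0 ^ 2 + deriv A t 0 1 ^ 2 + deriv A t 1 0 ^ 2 + deriv A t 1 1 ^ 2)
    + (κ/2) * sq t with hHdef
  have hH' : ∀ t, HasDerivAt H 0 t := by
    intro t
    have h := ((((((hBe 0 0 t).pow 2).add ((hBe 0 1 t).pow 2)).add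
        ((hBe 1 0 t).pow 2)).add ((hBe 1 1 t).pow 2)).const_mul (1/2:ℝ)).add
      ((((((hAe 0 0 t).pow 2).add ((hAe 0 1 t).pow 2)).add
        ((hAe 1 0 t).pow 2)).add ((hAe 1 1 t).pow 2)).const_mul (κ/2:ℝ))
    refine h.congr_deriv ?_
    rw [hodeE t 0 0, hodeE t 0 1, hodeE t 1 0, hodeE t 1 1,
      cof00, cof01, cof10, cof11]
    have hGt := (hTuniv t).2
    simp only [hGdef] at hGt
    push_cast
    linear_combination (Lam κ (A t) (deriv A t)) * hGt
  have hHconst : ∀ t, H t = H 0 := by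
    intro t
    have hdiff : Differentiable ℝ H := fun x => (hH' x).differentiableAt
    exact is_const_of_deriv_eq_zero hdiff (fun x => (hH' x).deriv) t 0
  have hH0 : H 0 = X1 κ A₀ B₀ := by
    simp only [hHdef, hA0, hB0, X1, hsqdef]
    rw [mip_expand, mip_expand]
    ring
  constructor
  · -- equilibrium → X₁ = κ
    intro hz
    have hB0' : B₀ = 0 := by rw [← hB0, hz 0]
    have hC0 : deriv (deriv A) 0 = 0 := by
      have : deriv A = fun _ => (0:M2) := funext hz
      rw [this]; exact deriv_const _ _
    have hode0 := hode 0
    rw [hC0, hA0, hz 0] at hode0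
    have hLam : Lam κ A₀ 0 = 2 * κ / mip A₀ A₀ := by
      simp [Lam]
    set s₀ : ℝ := mip A₀ A₀ with hs0def
    have hdet' : A₀ 0 0 * A₀ 1 1 - A₀ 0 1 * A₀ 1 0 = 1 := by
      rw [Matrix.det_fin_two] at hdet; linarith
    have hs0pos : 0 < s₀ := by
      rw [hs0def, mip_expand]
      nlinarith [sq_nonneg (A₀ 0 0 - A₀ 1 1), sq_nonneg (A₀ 0 1 + A₀ 1 0)]
    have key : ∀ i j : Fin 2, κ * A₀ i j = 2 * κ / s₀ * cofm A₀ i j := by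
      intro i j
      have h := congrFun (congrFun hode0 i) j
      simp only [Matrix.add_apply, Matrix.smul_apply, smul_eq_mul, Matrix.zero_apply,
        zero_add, hLam] at h
      exact h
    have key' : ∀ i j : Fin 2, κ * A₀ i j * s₀ = 2 * κ * cofm A₀ i j := by
      intro i j
      have h := key i j
      have hs0 : s₀ ≠ 0 := ne_of_gt hs0pos
      field_simp at h
      linear_combination h
    have hsum : κ * s₀ * s₀ = 4 * κ := by
      have k00 := key' 0 0; have k01 := key' 0 1
      have k10 := key' 1 0; have k11 := key' 1 1
      rw [cof00] at k00; rw [cof01] at k01; rw [cof10] at k10; rw [cof11] at k11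
      have hs0e : s₀ = A₀ 0 0 ^ 2 + A₀ 0 1 ^ 2 + A₀ 1 0 ^ 2 + A₀ 1 1 ^ 2 := by
        rw [hs0def, mip_expand]; ring
      rw [hs0e] at k00 k01 k10 k11 ⊢
      linear_combination A₀ 0 0 * k00 + A₀ 0 1 * k01 + A₀ 1 0 * k10 + A₀ 1 1 * k11
        + 4 * κ * hdet'
    have hfac : (κ * (s₀ - 2)) * (s₀ + 2) = 0 := by linear_combination hsum
    have hks : κ * s₀ = 2 * κ := by
      rcases mul_eq_zero.mp hfac with h | h
      · linear_combination h
      · linarith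
    rw [X1, hB0']
    rw [show mip (0:M2) (0:M2) = 0 by rw [mip_expand]; simp]
    rw [← hs0def]
    linear_combination hks / 2
  · -- X₁ = κ → equilibrium
    intro hX t
    have hHt : H t = κ := by rw [hHconst t, hH0, hX]
    have hsq := hsq2 t
    have hk2 : κ ≤ (κ/2) * sq t := by
      have hm : 0 ≤ κ * (sq t - 2) := mul_nonneg hκ (sub_nonneg.mpr hsq)
      have hm' : κ * (sq t - 2) = (κ/2) * sq t * 2 - 2 * κ := by ring
      linarith [hm' ▸ hm]
    have hBsq : deriv A t 0 0 ^ 2 + deriv A t 0 1 ^ 2 + deriv A t 1 0 ^ 2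
        + deriv A t 1 1 ^ 2 ≤ 0 := by
      simp only [hHdef] at hHt
      linarith
    have e00 : deriv A t 0 0 = 0 := by
      have : deriv A t 0 0 ^ 2 = 0 := le_antisymm (by linarith [hBsq, sq_nonneg (deriv A t 0 1), sq_nonneg (deriv A t 1 0), sq_nonneg (deriv A t 1 1)]) (sq_nonneg _)
      exact pow_eq_zero_iff two_ne_zero |>.mp this
    have e01 : deriv A t 0 1 = 0 := by
      have : deriv A t 0 1 ^ 2 = 0 := le_antisymm (by linarith [hBsq, sq_nonneg (deriv A t 0 0), sq_nonneg (deriv A t 1 0), sq_nonneg (deriv A t 1 1)]) (sq_nonneg _)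
      exact pow_eq_zero_iff two_ne_zero |>.mp this
    have e10 : deriv A t 1 0 = 0 := by
      have : deriv A t 1 0 ^ 2 = 0 := le_antisymm (by linarith [hBsq, sq_nonneg (deriv A t 0 0), sq_nonneg (deriv A t 0 1), sq_nonneg (deriv A t 1 1)]) (sq_nonneg _)
      exact pow_eq_zero_iff two_ne_zero |>.mp this
    have e11 : deriv A t 1 1 = 0 := by
      have : deriv A t 1 1 ^ 2 = 0 := le_antisymm (by linarith [hBsq, sq_nonneg (deriv A t 0 0), sq_nonneg (deriv A t 0 1), sq_nonneg (deriv A t 1 0)]) (sq_nonneg _)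
      exact pow_eq_zero_iff two_ne_zero |>.mp this
    ext i j
    fin_cases i <;> fin_cases j <;>
      simp only [Matrix.zero_apply] <;>
      [exact e00; exact e01; exact e10; exact e11]
end
end

section
/- Fix κ ≥ 0 and let A ∈ C²(ℝ, M²) be the solution of the initial value problem Ä + κA = Λ(A,Ȧ)·cof A with data (A₀,B₀) ∈ D, and set X₃ = X₃(A₀,B₀). Then A(t) ∈ SO(2,ℝ) for all t ∈ ℝ if and only if A₀ ∈ SO(2,ℝ) and X₁(A₀,B₀) = κ + ¼X₃². In that case A(t) = U(½X₃t)·A₀ for all t ∈ ℝ. -/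
open Matrix Topology Filter

noncomputable section

attribute [local instance] Matrix.normedAddCommGroup Matrix.normedSpace

lemma mip_eq (A B : M2) : mip A B = A 0 0 * B 0 0 + A 0 1 * B 0 1 + A 1 0 * B 1 0 + A 1 1 * B 1 1 := by
  simp [mip, Matrix.trace, Matrix.mul_apply, Fin.sum_univ_two, Matrix.transpose_apply, Matrix.diag]
  ring

lemma Um_apply (θ : ℝ) : Um θ = !![Real.cos θ, -Real.sin θ; Real.sin θ, Real.cos θ] := by
  ext i j; fin_cases i <;> fin_cases j <;> simp [Um, Zm, Matrix.one_apply]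

lemma isSO_iff (U : M2) : isSO U ↔
    (U 1 1 = U 0 0 ∧ U 0 1 = -(U 1 0) ∧ (U 0 0)^2 + (U 1 0)^2 = 1) := by
  constructor
  · rintro ⟨h1, h2⟩
    have hdet : U 0 0 * U 1 1 - U 0 1 * U 1 0 = 1 := by
      rw [← Matrix.det_fin_two]; exact h1
    have hU : U * Uᵀ = 1 := by
      have := Matrix.mul_nonsing_inv U (by rw [h1]; norm_num)
      rw [h2] at this; exact this
    have e00 := congrFun (congrFun hU 0) 0
    have e01 := congrFun (congrFun hU 0) 1
    have e11 := congrFun (congrFun hU 1) 1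
    simp [Matrix.mul_apply, Fin.sum_univ_two, Matrix.one_apply] at e00 e01 e11
    have hd : U 1 1 = U 0 0 := by
      linear_combination U 0 0 * hdet + U 0 1 * e01 - U 1 1 * e00
    have hc : U 0 1 = -(U 1 0) := by
      linear_combination U 1 1 * e01 - U 0 1 * e11 - U 1 0 * hdet
    exact ⟨hd, hc, by linear_combination e00 + (U 1 0 - U 0 1) * hc⟩
  · rintro ⟨h1, h2, h3⟩
    have hdet : U.det = 1 := by rw [Matrix.det_fin_two, h1, h2]; ring_nf; linarith [h3]
    refine ⟨hdet, Matrix.inv_eq_right_inv ?_⟩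
    ext i j; fin_cases i <;> fin_cases j <;>
      simp [Matrix.mul_apply, Fin.sum_univ_two, Matrix.one_apply, h1, h2] <;> nlinarith

lemma hasDerivAt_entry {F : ℝ → M2} {D : M2} {t : ℝ} (h : HasDerivAt F D t) (i j : Fin 2) :
    HasDerivAt (fun s => F s i j) (D i j) t :=
  hasDerivAt_pi.mp (hasDerivAt_pi.mp h i) j

lemma hasDerivAt_mat {F : ℝ → M2} {D : M2} {t : ℝ}
    (h : ∀ i j, HasDerivAt (fun s => F s i j) (D i j) t) : HasDerivAt F D t :=
  hasDerivAt_pi.mpr fun i => hasDerivAt_pi.mpr fun j => h i j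

lemma isSO_Um_mul (θ : ℝ) {U : M2} (h : isSO U) : isSO (Um θ * U) := by
  rw [isSO_iff] at h ⊢
  obtain ⟨h1, h2, h3⟩ := h
  rw [Um_apply]
  refine ⟨?_, ?_, ?_⟩ <;>
    simp [Matrix.mul_apply, Fin.sum_univ_two, h1, h2] <;>
    nlinarith [Real.sin_sq_add_cos_sq θ, h3]

lemma cofm_of_SO {U : M2} (h : isSO U) : cofm U = U := by
  rw [isSO_iff] at h
  obtain ⟨h1, h2, h3⟩ := h
  ext i j; fin_cases i <;> fin_cases j <;> simp [cofm, h1, h2]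

lemma mip_self_SO {U : M2} (h : isSO U) : mip U U = 2 := by
  rw [isSO_iff] at h
  obtain ⟨h1, h2, h3⟩ := h
  rw [mip_eq, h1, h2]; nlinarith

lemma forward (κ : ℝ) (A : ℝ → M2) (hA : ContDiff ℝ 2 A)
    (hode : ∀ t : ℝ, deriv (deriv A) t + κ • A t
      = Lam κ (A t) (deriv A t) • cofm (A t))
    (hSO : ∀ t : ℝ, isSO (A t)) :
    X1 κ (A 0) (deriv A 0) = κ + (1/4) * X3 (A 0) (deriv A 0) ^ 2 ∧
    ∀ t : ℝ, A t = Um (X3 (A 0) (deriv A 0) * t / 2) * A 0 := by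
  have h2 : (2 : WithTop ℕ∞) = 1 + 1 := by norm_num
  rw [h2] at hA
  obtain ⟨hdiff, -, hA'⟩ := contDiff_succ_iff_deriv.mp hA
  have hdiff' : Differentiable ℝ (deriv A) := hA'.differentiable one_ne_zero
  -- entry structure
  have h11 : ∀ t, A t 1 1 = A t 0 0 := fun t => ((isSO_iff _).mp (hSO t)).1
  have h01 : ∀ t, A t 0 1 = -(A t 1 0) := fun t => ((isSO_iff _).mp (hSO t)).2.1
  have hcs : ∀ t, (A t 0 0)^2 + (A t 1 0)^2 = 1 := fun t => ((isSO_iff _).mp (hSO t)).2.2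
  -- entry derivatives
  have hc : ∀ t, HasDerivAt (fun u => A u 0 0) (deriv A t 0 0) t :=
    fun t => hasDerivAt_entry (hdiff t).hasDerivAt 0 0
  have hs : ∀ t, HasDerivAt (fun u => A u 1 0) (deriv A t 1 0) t :=
    fun t => hasDerivAt_entry (hdiff t).hasDerivAt 1 0
  have hc' : ∀ t, HasDerivAt (fun u => deriv A u 0 0) (deriv (deriv A) t 0 0) t :=
    fun t => hasDerivAt_entry (hdiff' t).hasDerivAt 0 0
  have hs' : ∀ t, HasDerivAt (fun u => deriv A u 1 0) (deriv (deriv A) t 1 0) t :=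
    fun t => hasDerivAt_entry (hdiff' t).hasDerivAt 1 0
  have h01d : ∀ t, deriv A t 0 1 = -(deriv A t 1 0) := by
    intro t
    have e1 : HasDerivAt (fun u => A u 0 1) (deriv A t 0 1) t :=
      hasDerivAt_entry (hdiff t).hasDerivAt 0 1
    have e2 : HasDerivAt (fun u => A u 0 1) (-(deriv A t 1 0)) t :=
      (hs t).neg.congr_of_eventuallyEq (Filter.Eventually.of_forall fun u => h01 u)
    exact e1.unique e2
  have h11d : ∀ t, deriv A t 1 1 = deriv A t 0 0 := by
    intro t
    have e1 : HasDerivAt (fun u => A u 1 1) (deriv A t 1 1) t :=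
      hasDerivAt_entry (hdiff t).hasDerivAt 1 1
    have e2 : HasDerivAt (fun u => A u 1 1) (deriv A t 0 0) t :=
      (hc t).congr_of_eventuallyEq (Filter.Eventually.of_forall fun u => h11 u)
    exact e1.unique e2
  -- ODE entrywise
  have ode00 : ∀ t, deriv (deriv A) t 0 0
      = (Lam κ (A t) (deriv A t) - κ) * A t 0 0 := by
    intro t
    have := congrFun (congrFun (hode t) 0) 0
    simp [Matrix.add_apply, Matrix.smul_apply, cofm, smul_eq_mul] at this
    rw [h11 t] at this; linarith
  have ode10 : ∀ t, deriv (deriv A) t 1 0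
      = (Lam κ (A t) (deriv A t) - κ) * A t 1 0 := by
    intro t
    have := congrFun (congrFun (hode t) 1) 0
    simp [Matrix.add_apply, Matrix.smul_apply, cofm, smul_eq_mul] at this
    rw [h01 t] at this; ring_nf at this ⊢; linarith
  -- constraint derivative
  have hconstr : ∀ t, A t 0 0 * deriv A t 0 0 + A t 1 0 * deriv A t 1 0 = 0 := by
    intro t
    have e1 : HasDerivAt (fun u => (A u 0 0)^2 + (A u 1 0)^2)
        (2 * A t 0 0 ^ 1 * deriv A t 0 0 + 2 * A t 1 0 ^ 1 * deriv A t 1 0) t :=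
      (((hc t).pow 2).add ((hs t).pow 2)).congr_deriv (by norm_num)
    have e2 : HasDerivAt (fun u => (A u 0 0)^2 + (A u 1 0)^2) 0 t :=
      (hasDerivAt_const t (1:ℝ)).congr_of_eventuallyEq
        (Filter.Eventually.of_forall fun u => hcs u)
    have := e1.unique e2
    simp at this; linarith
  -- angular momentum
  have hφ : ∀ t, HasDerivAt (fun u => A u 0 0 * deriv A u 1 0 - A u 1 0 * deriv A u 0 0) 0 t := by
    intro t
    have e1 := ((hc t).mul (hs' t)).sub ((hs t).mul (hc' t))
    refine e1.congr_deriv ?_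
    rw [ode00 t, ode10 t]; ring
  have hφc : ∀ t, A t 0 0 * deriv A t 1 0 - A t 1 0 * deriv A t 0 0
      = A 0 0 0 * deriv A 0 1 0 - A 0 1 0 * deriv A 0 0 0 := by
    intro t
    exact is_const_of_deriv_eq_zero (fun u => (hφ u).differentiableAt)
      (fun u => (hφ u).deriv) t 0
  set ω : ℝ := A 0 0 0 * deriv A 0 1 0 - A 0 1 0 * deriv A 0 0 0 with hω
  have hX3 : X3 (A 0) (deriv A 0) = 2 * ω := by
    rw [X3, mip_eq]
    simp only [Matrix.add_apply, Matrix.mul_apply, Fin.sum_univ_two, Zm]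
    norm_num
    rw [h11 0, h01 0, h11d 0, h01d 0, hω]; ring
  -- velocity identities
  have hce : ∀ t, deriv A t 0 0 = -(ω * A t 1 0) := by
    intro t
    have e2 := (hφc t).symm
    linear_combination A t 0 0 * hconstr t + A t 1 0 * e2 - deriv A t 0 0 * hcs t
  have hse : ∀ t, deriv A t 1 0 = ω * A t 0 0 := by
    intro t
    have e2 := (hφc t).symm
    linear_combination A t 1 0 * hconstr t - A t 0 0 * e2 - deriv A t 1 0 * hcs t
  -- rotate back: constants
  have hp : ∀ t, Real.cos (ω*t) * A t 0 0 + Real.sin (ω*t) * A t 1 0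
      = A 0 0 0 := by
    intro t
    have hlin : ∀ u : ℝ, HasDerivAt (fun x : ℝ => ω * x) ω u := by
      intro u
      simpa using (hasDerivAt_id u).const_mul ω
    have hder : ∀ u, HasDerivAt (fun x => Real.cos (ω*x) * A x 0 0 + Real.sin (ω*x) * A x 1 0) 0 u := by
      intro u
      have e1 := (((hlin u).cos.mul (hc u)).add ((hlin u).sin.mul (hs u)))
      refine e1.congr_deriv ?_
      rw [hce u, hse u]; ring
    have := is_const_of_deriv_eq_zero (fun u => (hder u).differentiableAt)
      (fun u => (hder u).deriv) t 0
    simpa using this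
  have hq : ∀ t, -Real.sin (ω*t) * A t 0 0 + Real.cos (ω*t) * A t 1 0
      = A 0 1 0 := by
    intro t
    have hlin : ∀ u : ℝ, HasDerivAt (fun x : ℝ => ω * x) ω u := by
      intro u
      simpa using (hasDerivAt_id u).const_mul ω
    have hder : ∀ u, HasDerivAt (fun x => -Real.sin (ω*x) * A x 0 0 + Real.cos (ω*x) * A x 1 0) 0 u := by
      intro u
      have e1 := (((hlin u).sin.neg.mul (hc u)).add ((hlin u).cos.mul (hs u)))
      refine e1.congr_deriv ?_
      rw [hce u, hse u]; simp only [Pi.neg_apply]; ring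
    have := is_const_of_deriv_eq_zero (fun u => (hder u).differentiableAt)
      (fun u => (hder u).deriv) t 0
    simpa using this
  have hct : ∀ t, A t 0 0 = Real.cos (ω*t) * A 0 0 0 - Real.sin (ω*t) * A 0 1 0 := by
    intro t
    linear_combination Real.cos (ω*t) * hp t - Real.sin (ω*t) * hq t
      - A t 0 0 * Real.sin_sq_add_cos_sq (ω*t)
  have hst : ∀ t, A t 1 0 = Real.sin (ω*t) * A 0 0 0 + Real.cos (ω*t) * A 0 1 0 := by
    intro t
    linear_combination Real.sin (ω*t) * hp t + Real.cos (ω*t) * hq t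
      - A t 1 0 * Real.sin_sq_add_cos_sq (ω*t)
  constructor
  · rw [X1, mip_eq, mip_eq, hX3]
    rw [h11 0, h01 0, h11d 0, h01d 0]
    have e1 := hconstr 0
    have e3 := hcs 0
    linear_combination (A 0 0 0 * deriv A 0 1 0 - A 0 1 0 * deriv A 0 0 0 + ω) * hω.symm
      + (A 0 0 0 * deriv A 0 0 0 + A 0 1 0 * deriv A 0 1 0) * e1
      + (κ - (deriv A 0 0 0)^2 - (deriv A 0 1 0)^2) * e3
  · intro t
    have harg : X3 (A 0) (deriv A 0) * t / 2 = ω * t := by rw [hX3]; ring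
    rw [harg, Um_apply, Matrix.eta_fin_two (A t), Matrix.eta_fin_two (A 0)]
    rw [h01 t, h11 t, h01 0, h11 0, hct t, hst t]
    ext i j
    fin_cases i <;> fin_cases j <;>
      simp [Matrix.mul_apply, Fin.sum_univ_two] <;> ring

lemma Zm_mul_Zm : Zm * Zm = -1 := by
  ext i j
  fin_cases i <;> fin_cases j <;>
    simp [Zm, Matrix.mul_apply, Fin.sum_univ_two, Matrix.neg_apply, Matrix.one_apply]

lemma Um_zero : Um 0 = 1 := by
  simp [Um]

lemma X3_entries (M B : M2) : X3 M B = (1/2) * ((M 0 1 - M 1 0) * B 0 0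
    + (-(M 1 1) - M 0 0) * B 0 1 + (M 0 0 + M 1 1) * B 1 0 + (M 0 1 - M 1 0) * B 1 1) := by
  rw [X3, mip_eq]
  simp only [Matrix.add_apply, Matrix.mul_apply, Fin.sum_univ_two, Zm]
  norm_num
  ring

lemma B0_eq (κ : ℝ) (A₀ B₀ : M2) (hSO : isSO A₀) (htan : mip B₀ (cofm A₀) = 0)
    (hX1 : X1 κ A₀ B₀ = κ + (1/4) * X3 A₀ B₀ ^ 2) :
    B₀ = (X3 A₀ B₀ / 2) • (Zm * A₀) := by
  obtain ⟨h11, h01, hcs⟩ := (isSO_iff _).mp hSO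
  rw [cofm_of_SO hSO, mip_eq] at htan
  rw [h11, h01] at htan
  have eX3 : X3 A₀ B₀ = -(A₀ 1 0) * B₀ 0 0 - A₀ 0 0 * B₀ 0 1
      + A₀ 0 0 * B₀ 1 0 - A₀ 1 0 * B₀ 1 1 := by
    rw [X3_entries, h11, h01]; ring
  have hT : B₀ 0 0 ^ 2 + B₀ 0 1 ^ 2 + B₀ 1 0 ^ 2 + B₀ 1 1 ^ 2 = X3 A₀ B₀ ^ 2 / 2 := by
    rw [X1, mip_eq, mip_eq, h11, h01] at hX1
    linear_combination 2 * hX1 - 2 * κ * hcs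
  set c := A₀ 0 0
  set s := A₀ 1 0
  set γ := c * B₀ 0 0 - s * B₀ 0 1 - s * B₀ 1 0 - c * B₀ 1 1 with hγdef
  set δ := s * B₀ 0 0 + c * B₀ 0 1 + c * B₀ 1 0 - s * B₀ 1 1 with hδdef
  have h0 : γ^2 + δ^2 = 0 := by
    rw [hγdef, hδdef]
    linear_combination (-(c * B₀ 0 0 - s * B₀ 0 1 + s * B₀ 1 0 + c * B₀ 1 1)) * htan
      + (2 * (B₀ 0 0 ^ 2 + B₀ 0 1 ^ 2 + B₀ 1 0 ^ 2 + B₀ 1 1 ^ 2)) * hcs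
      + 2 * hT
      + (X3 A₀ B₀ + (-(A₀ 1 0) * B₀ 0 0 - A₀ 0 0 * B₀ 0 1
          + A₀ 0 0 * B₀ 1 0 - A₀ 1 0 * B₀ 1 1)) * eX3
  have hγ : γ = 0 := by
    have : γ^2 = 0 := le_antisymm (by nlinarith [sq_nonneg δ]) (sq_nonneg γ)
    exact pow_eq_zero_iff two_ne_zero |>.mp this
  have hδ : δ = 0 := by
    have : δ^2 = 0 := le_antisymm (by nlinarith [sq_nonneg γ]) (sq_nonneg δ)
    exact pow_eq_zero_iff two_ne_zero |>.mp this
  rw [hγdef] at hγ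
  rw [hδdef] at hδ
  have hZA : Zm * A₀ = !![-s, -c; c, -s] := by
    ext i j
    fin_cases i <;> fin_cases j <;>
      simp [Zm, Matrix.mul_apply, Fin.sum_univ_two, h11, h01] <;> rfl
  rw [hZA]
  ext i j
  fin_cases i <;> fin_cases j <;> simp only [Matrix.smul_apply, smul_eq_mul] <;> norm_num
  · linear_combination (c/2) * htan + (s/2) * eX3 + (c/2) * hγ + (s/2) * hδ - B₀ 0 0 * hcs
  · linear_combination (-s/2) * htan + (c/2) * eX3 + (-s/2) * hγ + (c/2) * hδ - B₀ 0 1 * hcs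
  · linear_combination (s/2) * htan + (-c/2) * eX3 + (-s/2) * hγ + (c/2) * hδ - B₀ 1 0 * hcs
  · linear_combination (c/2) * htan + (s/2) * eX3 + (-c/2) * hγ + (-s/2) * hδ - B₀ 1 1 * hcs

lemma hasDerivAt_const_mul_mat (C : M2) {F : ℝ → M2} {D : M2} {t : ℝ}
    (h : HasDerivAt F D t) : HasDerivAt (fun u => C * F u) (C * D) t := by
  apply hasDerivAt_mat
  intro i j
  have heq : ∀ u, (C * F u) i j = C i 0 * F u 0 j + C i 1 * F u 1 j := by
    intro u; simp [Matrix.mul_apply, Fin.sum_univ_two]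
  have hD : (C * D) i j = C i 0 * D 0 j + C i 1 * D 1 j := by
    simp [Matrix.mul_apply, Fin.sum_univ_two]
  rw [hD]
  exact (((hasDerivAt_entry h 0 j).const_mul (C i 0)).add
    ((hasDerivAt_entry h 1 j).const_mul (C i 1))).congr_of_eventuallyEq
    (Filter.Eventually.of_forall heq)

lemma Um_mul_eq (θ : ℝ) (A₀ : M2) :
    Um θ * A₀ = Real.cos θ • A₀ + Real.sin θ • (Zm * A₀) := by
  rw [Um, add_mul, smul_mul_assoc, smul_mul_assoc, one_mul]

lemma tilde_deriv (A₀ : M2) (ω t : ℝ) :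
    HasDerivAt (fun u => Um (ω*u) * A₀) (ω • (Zm * (Um (ω*t) * A₀))) t := by
  have hlin : HasDerivAt (fun x : ℝ => ω * x) ω t := by
    simpa using (hasDerivAt_id t).const_mul ω
  have h1 : HasDerivAt (fun u => Real.cos (ω*u) • A₀ + Real.sin (ω*u) • (Zm * A₀))
      ((-Real.sin (ω*t) * ω) • A₀ + (Real.cos (ω*t) * ω) • (Zm * A₀)) t :=
    ((hlin.cos).smul_const A₀).add ((hlin.sin).smul_const (Zm * A₀))
  have h2 : (fun u => Um (ω*u) * A₀)
      = fun u => Real.cos (ω*u) • A₀ + Real.sin (ω*u) • (Zm * A₀) := by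
    funext u; exact Um_mul_eq _ _
  rw [h2]
  convert h1 using 1
  rw [Um_mul_eq, mul_add, mul_smul_comm, mul_smul_comm, ← Matrix.mul_assoc, Zm_mul_Zm,
    neg_one_mul, smul_add, smul_smul, smul_smul, smul_neg]
  rw [show ω * Real.sin (ω*t) = -(-Real.sin (ω*t) * ω) by ring,
    show ω * Real.cos (ω*t) = Real.cos (ω*t) * ω by ring, neg_smul, neg_neg]
  exact add_comm _ _

lemma v_contDiffAt (κ : ℝ) (x : M2 × M2) (hx : mip x.1 x.1 ≠ 0) :
    ContDiffAt ℝ 1 (fun p : M2 × M2 =>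
      ((p.2, Lam κ p.1 p.2 • cofm p.1 - κ • p.1) : M2 × M2)) x := by
  have hentry1 : ∀ i j : Fin 2, ContDiff ℝ 1 (fun p : M2 × M2 => p.1 i j) := by
    intro i j
    exact contDiff_pi.mp (contDiff_pi.mp contDiff_fst i) j
  have hentry2 : ∀ i j : Fin 2, ContDiff ℝ 1 (fun p : M2 × M2 => p.2 i j) := by
    intro i j
    exact contDiff_pi.mp (contDiff_pi.mp contDiff_snd i) j
  have hdet2 : ContDiff ℝ 1 (fun p : M2 × M2 => (p.2).det) := by
    have h : (fun p : M2 × M2 => (p.2).det)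
        = fun p => p.2 0 0 * p.2 1 1 - p.2 0 1 * p.2 1 0 :=
      funext fun p => Matrix.det_fin_two _
    rw [h]
    exact ((hentry2 0 0).mul (hentry2 1 1)).sub ((hentry2 0 1).mul (hentry2 1 0))
  have hmip : ContDiff ℝ 1 (fun p : M2 × M2 => mip p.1 p.1) := by
    have h : (fun p : M2 × M2 => mip p.1 p.1) = fun p =>
        p.1 0 0 * p.1 0 0 + p.1 0 1 * p.1 0 1 + p.1 1 0 * p.1 1 0 + p.1 1 1 * p.1 1 1 :=
      funext fun p => mip_eq _ _
    rw [h]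
    exact ((((hentry1 0 0).mul (hentry1 0 0)).add ((hentry1 0 1).mul (hentry1 0 1))).add
      ((hentry1 1 0).mul (hentry1 1 0))).add ((hentry1 1 1).mul (hentry1 1 1))
  have hLam : ContDiffAt ℝ 1 (fun p : M2 × M2 => Lam κ p.1 p.2) x := by
    have h : (fun p : M2 × M2 => Lam κ p.1 p.2)
        = fun p => (2 * (κ - (p.2).det)) / (mip p.1 p.1) := funext fun p => rfl
    rw [h]
    exact ContDiffAt.div (contDiff_const.mul (contDiff_const.sub hdet2)).contDiffAt
      hmip.contDiffAt hx
  have hcof : ContDiff ℝ 1 (fun p : M2 × M2 => cofm p.1) := by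
    apply contDiff_pi.mpr
    intro i
    apply contDiff_pi.mpr
    intro j
    fin_cases i <;> fin_cases j <;> simp only [cofm] <;> norm_num
    · exact hentry1 1 1
    · exact (hentry1 1 0).neg
    · exact (hentry1 0 1).neg
    · exact hentry1 0 0
  exact (contDiff_snd.contDiffAt).prodMk
    ((hLam.smul hcof.contDiffAt).sub ((contDiff_fst.const_smul κ).contDiffAt))

lemma backward (κ : ℝ) (A₀ B₀ : M2) (hSO : isSO A₀) (htan : mip B₀ (cofm A₀) = 0)
    (hX1 : X1 κ A₀ B₀ = κ + (1/4) * X3 A₀ B₀ ^ 2)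
    (A : ℝ → M2) (hA : ContDiff ℝ 2 A)
    (hA0 : A 0 = A₀) (hB0 : deriv A 0 = B₀)
    (hode : ∀ t : ℝ, deriv (deriv A) t + κ • A t
      = Lam κ (A t) (deriv A t) • cofm (A t)) :
    ∀ t : ℝ, A t = Um (X3 A₀ B₀ / 2 * t) * A₀ := by
  set ω : ℝ := X3 A₀ B₀ / 2 with hωdef
  have h2 : (2 : WithTop ℕ∞) = 1 + 1 := by norm_num
  rw [h2] at hA
  obtain ⟨hdiff, -, hA'⟩ := contDiff_succ_iff_deriv.mp hA
  have hdiff' : Differentiable ℝ (deriv A) := hA'.differentiable one_ne_zero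
  set v : M2 × M2 → M2 × M2 :=
    fun p => (p.2, Lam κ p.1 p.2 • cofm p.1 - κ • p.1) with hvdef
  set f : ℝ → M2 × M2 := fun t => (A t, deriv A t) with hfdef
  set g : ℝ → M2 × M2 := fun t => (Um (ω*t) * A₀, ω • (Zm * (Um (ω*t) * A₀))) with hgdef
  -- f solves the ODE
  have hfd : ∀ t, HasDerivAt f (v (f t)) t := by
    intro t
    apply HasDerivAt.prodMk
    · exact (hdiff t).hasDerivAt
    · have h := (hdiff' t).hasDerivAt
      have he : Lam κ (A t) (deriv A t) • cofm (A t) - κ • A t = deriv (deriv A) t := by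
        rw [← hode t]; abel
      show HasDerivAt (deriv A) (Lam κ (A t) (deriv A t) • cofm (A t) - κ • A t) t
      rw [he]; exact h
  -- g solves the ODE
  have hSOt : ∀ t, isSO (Um (ω*t) * A₀) := fun t => isSO_Um_mul _ hSO
  have hgd : ∀ t, HasDerivAt g (v (g t)) t := by
    intro t
    have h1 := tilde_deriv A₀ ω t
    have h := (hasDerivAt_const_mul_mat Zm h1).const_smul ω
    have hLam : Lam κ (Um (ω*t) * A₀) (ω • (Zm * (Um (ω*t) * A₀))) = κ - ω^2 := by
        rw [Lam, mip_self_SO (hSOt t)]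
        have hdet : (ω • (Zm * (Um (ω*t) * A₀))).det = ω^2 := by
          rw [Matrix.det_smul, Matrix.det_mul, (hSOt t).1]
          have : Zm.det = 1 := by simp [Zm, Matrix.det_fin_two]
          simp [this]
        rw [hdet]; ring
    have key : ω • (Zm * (ω • (Zm * (Um (ω*t) * A₀))))
        = (κ - ω^2) • (Um (ω*t) * A₀) - κ • (Um (ω*t) * A₀) := by
        rw [mul_smul_comm, smul_smul, ← Matrix.mul_assoc Zm Zm, Zm_mul_Zm, neg_one_mul,
          smul_neg, ← sub_smul]
        rw [show κ - ω^2 - κ = -(ω * ω) by ring, neg_smul]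
    have he : v (g t) = (ω • (Zm * (Um (ω*t) * A₀)),
        ω • (Zm * (ω • (Zm * (Um (ω*t) * A₀))))) := by
      refine Prod.ext rfl ?_
      show Lam κ (Um (ω*t) * A₀) (ω • (Zm * (Um (ω*t) * A₀))) • cofm (Um (ω*t) * A₀)
        - κ • (Um (ω*t) * A₀) = _
      rw [hLam, cofm_of_SO (hSOt t)]
      exact key.symm
    rw [he]
    exact h1.prodMk h
  -- initial condition
  have heq0 : f 0 = g 0 := by
    rw [hfdef, hgdef]
    have hB : B₀ = ω • (Zm * A₀) := B0_eq κ A₀ B₀ hSO htan hX1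
    simp only [mul_zero, Um_zero, one_mul]
    rw [hA0, hB0, hB]
  -- clopen argument
  set S : Set ℝ := {t | f t = g t} with hSdef
  have hfc : Continuous f := by
    apply Continuous.prodMk
    · exact hdiff.continuous
    · exact hdiff'.continuous
  have hgc : Continuous g := by
    apply continuous_iff_continuousAt.mpr
    intro t
    exact (hgd t).differentiableAt.continuousAt
  have hclosed : IsClosed S := isClosed_eq hfc hgc
  have hopen : IsOpen S := by
    rw [isOpen_iff_mem_nhds]
    intro t₀ ht₀
    have ht₀' : f t₀ = g t₀ := ht₀
    have hne : mip (f t₀).1 (f t₀).1 ≠ 0 := by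
      rw [ht₀']
      rw [hgdef]
      show mip (Um (ω*t₀) * A₀) (Um (ω*t₀) * A₀) ≠ 0
      rw [mip_self_SO (hSOt t₀)]; norm_num
    obtain ⟨K, s, hs, hlip⟩ := (v_contDiffAt κ (f t₀) hne).exists_lipschitzOnWith
    have hfev : ∀ᶠ t in 𝓝 t₀, HasDerivAt f (v (f t)) t ∧ f t ∈ s := by
      have : ∀ᶠ t in 𝓝 t₀, f t ∈ s := hfc.continuousAt.preimage_mem_nhds hs
      exact this.mono fun t ht => ⟨hfd t, ht⟩
    have hgev : ∀ᶠ t in 𝓝 t₀, HasDerivAt g (v (g t)) t ∧ g t ∈ s := by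
      have hs' : s ∈ 𝓝 (g t₀) := by rwa [← ht₀']
      have : ∀ᶠ t in 𝓝 t₀, g t ∈ s := hgc.continuousAt.preimage_mem_nhds hs'
      exact this.mono fun t ht => ⟨hgd t, ht⟩
    exact ODE_solution_unique_of_eventually (Filter.Eventually.of_forall fun _ => hlip) hfev hgev ht₀'
  have hS : S = Set.univ := IsClopen.eq_univ ⟨hclosed, hopen⟩ ⟨0, heq0⟩
  intro t
  have ht : f t = g t := by
    have : t ∈ S := hS ▸ Set.mem_univ t
    exact this
  exact congrArg Prod.fst ht


/-- characterization of rigid rotations. -/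
theorem rigid_rotation_iff (κ : ℝ) (hκ : 0 ≤ κ) (A₀ B₀ : M2)
    (hdet : A₀.det = 1) (htan : mip B₀ (cofm A₀) = 0)
    (A : ℝ → M2) (hA : ContDiff ℝ 2 A)
    (hA0 : A 0 = A₀) (hB0 : deriv A 0 = B₀)
    (hode : ∀ t : ℝ, deriv (deriv A) t + κ • A t
      = Lam κ (A t) (deriv A t) • cofm (A t)) :
    ((∀ t : ℝ, isSO (A t)) ↔
      (isSO A₀ ∧ X1 κ A₀ B₀ = κ + (1/4) * X3 A₀ B₀ ^ 2)) ∧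
    ((∀ t : ℝ, isSO (A t)) → ∀ t : ℝ, A t = Um (X3 A₀ B₀ * t / 2) * A₀) := by
  constructor
  · constructor
    · intro h
      refine ⟨hA0 ▸ h 0, ?_⟩
      have := (forward κ A hA hode h).1
      rwa [hA0, hB0] at this
    · rintro ⟨h1, h2⟩ t
      have hb := backward κ A₀ B₀ h1 htan h2 A hA hA0 hB0 hode t
      rw [hb]
      exact isSO_Um_mul _ h1
  · intro h t
    have := (forward κ A hA hode h).2 t
    rwa [hA0, hB0] at this
end
end
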